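/- Let $\hat g : \mathcal{X} \times \mathcal{X} \times \Xi \to \mathbb{R}$, and for each $r$ define $\hat f^r(x) = \frac{1}{r}\sum_{i=1}^r \hat g(x, x^{i-1}, \xi^i)$, where $x^r$ is a minimizer of $\hat f^r$ over $\mathcal{X}$. Suppose $\hat g(\cdot, y, \xi)$ is strongly convex in its first argument with uniform parameter $\gamma > 0$, and $\hat g(\cdot, y, \xi)$ is Lipschitz in its first argument with uniform constant $\theta' > 0$. Then $\|x^{r+1} - x^r\| \le \frac{2\theta'}{\gamma}\cdot\frac{1}{r+1}$ for all $r$, i.e., $\|x^{r+1} - x^r\| = O(1/r)$. -/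

import Mathlib

open Finset

lemma key_min {E : Type*} [NormedAddCommGroup E] [NormedSpace ℝ E] {X : Set E}
    {f : E → ℝ} {γ : ℝ} (hf : UniformConvexOn X (fun r => γ / 2 * r ^ 2) f)
    {x₀ z : E} (hx₀ : x₀ ∈ X) (hz : z ∈ X) (hm : ∀ w ∈ X, f x₀ ≤ f w) :
    f x₀ + γ / 2 * ‖x₀ - z‖ ^ 2 ≤ f z := by
  set c := γ / 2 * ‖x₀ - z‖ ^ 2 with hc
  have h1 : ∀ t ∈ Set.Ioo (0:ℝ) 1, f x₀ + (1 - t) * c ≤ f z := by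
    intro t ht
    have ha : (0:ℝ) ≤ 1 - t := by linarith [ht.2]
    have hb : (0:ℝ) ≤ t := ht.1.le
    have hab : (1 - t) + t = 1 := by ring
    have hcombo := hf.2 hx₀ hz ha hb hab
    have hmem := hf.1 hx₀ hz ha hb hab
    have hlow := hm _ hmem
    simp only [smul_eq_mul] at hcombo
    rw [← hc] at hcombo
    nlinarith [ht.1, mul_pos ht.1 ht.1]
  have htend : Filter.Tendsto (fun t : ℝ => f x₀ + (1 - t) * c)
      (nhdsWithin 0 (Set.Ioi 0)) (nhds (f x₀ + c)) := by
    have hcont : Filter.Tendsto (fun t : ℝ => f x₀ + (1 - t) * c)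
        (nhds 0) (nhds (f x₀ + (1 - 0) * c)) := by
      apply Continuous.tendsto (by continuity)
    simpa using hcont.mono_left nhdsWithin_le_nhds
  refine le_of_tendsto htend ?_
  filter_upwards [Ioo_mem_nhdsGT_of_mem (by norm_num : (0:ℝ) ∈ Set.Ico (0:ℝ) 1)] with t ht
  exact h1 t ht

/-- SSUM iterates: if `ĝ(·, y, ξ)` is uniformly `γ`-strongly convex and uniformly
`θ'`-Lipschitz in its first argument, and `x^r` minimizes
`f̂^r(x) = (1/r) ∑_{i=1}^r ĝ(x, x^{i-1}, ξ^i)` over `𝒳`,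
then `‖x^{r+1} - x^r‖ ≤ (2θ'/γ) · 1/(r+1)`. -/
theorem stmt6 {n : ℕ} {Ξ : Type*} (X : Set (EuclideanSpace ℝ (Fin n)))
    (hXconv : Convex ℝ X)
    (ghat : EuclideanSpace ℝ (Fin n) → EuclideanSpace ℝ (Fin n) → Ξ → ℝ)
    (γ θ' : ℝ) (hγ : 0 < γ) (hθ' : 0 < θ')
    (hsc : ∀ (y : EuclideanSpace ℝ (Fin n)) (ξ : Ξ),
      StrongConvexOn X γ (fun x => ghat x y ξ))
    (hlip : ∀ (y : EuclideanSpace ℝ (Fin n)) (ξ : Ξ), ∀ a ∈ X, ∀ b ∈ X,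
      |ghat a y ξ - ghat b y ξ| ≤ θ' * ‖a - b‖)
    (x : ℕ → EuclideanSpace ℝ (Fin n)) (ξ : ℕ → Ξ) (hx0 : x 0 ∈ X)
    (hmin : ∀ r : ℕ, 1 ≤ r → x r ∈ X ∧ ∀ z ∈ X,
      (1 / (r : ℝ)) * ∑ i ∈ Finset.range r, ghat (x r) (x i) (ξ (i + 1)) ≤
      (1 / (r : ℝ)) * ∑ i ∈ Finset.range r, ghat z (x i) (ξ (i + 1))) :
    ∀ r : ℕ, 1 ≤ r → ‖x (r + 1) - x r‖ ≤ 2 * θ' / γ * (1 / ((r : ℝ) + 1)) := by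
  set F : ℕ → EuclideanSpace ℝ (Fin n) → ℝ :=
    fun m z => (1 / (m : ℝ)) * ∑ i ∈ Finset.range m, ghat z (x i) (ξ (i + 1)) with hF
  have hFsc : ∀ m : ℕ, 1 ≤ m → UniformConvexOn X (fun s => γ / 2 * s ^ 2) (F m) := by
    intro m hm
    have hmpos : (0:ℝ) < m := by exact_mod_cast hm
    refine ⟨hXconv, ?_⟩
    intro a ha b hb p q hp hq hpq
    simp only [smul_eq_mul, hF]
    have hsum : ∑ i ∈ Finset.range m, ghat (p • a + q • b) (x i) (ξ (i + 1)) ≤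
        ∑ i ∈ Finset.range m, (p * ghat a (x i) (ξ (i + 1)) + q * ghat b (x i) (ξ (i + 1))
          - p * q * (γ / 2 * ‖a - b‖ ^ 2)) := by
      apply Finset.sum_le_sum
      intro i _
      have h := (hsc (x i) (ξ (i + 1))).2 ha hb hp hq hpq
      simpa using h
    have h2 : (1 / (m : ℝ)) * ∑ i ∈ Finset.range m, ghat (p • a + q • b) (x i) (ξ (i + 1)) ≤
        (1 / (m : ℝ)) * ∑ i ∈ Finset.range m, (p * ghat a (x i) (ξ (i + 1))
          + q * ghat b (x i) (ξ (i + 1)) - p * q * (γ / 2 * ‖a - b‖ ^ 2)) := by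
      apply mul_le_mul_of_nonneg_left hsum (by positivity)
    refine h2.trans_eq ?_
    rw [Finset.sum_sub_distrib, Finset.sum_add_distrib, ← Finset.mul_sum, ← Finset.mul_sum,
      Finset.sum_const, Finset.card_range, nsmul_eq_mul]
    field_simp
    try ring
  intro r hr
  obtain ⟨hxr, hminr⟩ := hmin r hr
  obtain ⟨hxr1, hminr1⟩ := hmin (r + 1) (by omega)
  set a := x (r + 1) with hadef
  set b := x r with hbdef
  set d := ‖a - b‖ with hd
  have hd0 : 0 ≤ d := norm_nonneg _
  have hrpos : (0:ℝ) < r := by exact_mod_cast hr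
  have hr1pos : (0:ℝ) < (r:ℝ) + 1 := by positivity
  -- strongly convex minimizer inequalities
  have h1 : F r b + γ / 2 * ‖b - a‖ ^ 2 ≤ F r a :=
    key_min (hFsc r hr) hxr hxr1 hminr
  have h2 : F (r + 1) a + γ / 2 * ‖a - b‖ ^ 2 ≤ F (r + 1) b := by
    have := key_min (hFsc (r + 1) (by omega)) hxr1 hxr hminr1
    simpa [norm_sub_rev] using this
  rw [norm_sub_rev, ← hd] at h1
  rw [← hd] at h2
  -- sum bounds
  have hS1 : |∑ i ∈ Finset.range r, (ghat a (x i) (ξ (i + 1)) - ghat b (x i) (ξ (i + 1)))|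
      ≤ (r : ℝ) * (θ' * d) := by
    calc |∑ i ∈ Finset.range r, (ghat a (x i) (ξ (i + 1)) - ghat b (x i) (ξ (i + 1)))|
        ≤ ∑ i ∈ Finset.range r, |ghat a (x i) (ξ (i + 1)) - ghat b (x i) (ξ (i + 1))| :=
          Finset.abs_sum_le_sum_abs _ _
      _ ≤ ∑ i ∈ Finset.range r, θ' * d := by
          apply Finset.sum_le_sum
          intro i _
          exact hlip (x i) (ξ (i + 1)) a hxr1 b hxr
      _ = (r : ℝ) * (θ' * d) := by
          rw [Finset.sum_const, Finset.card_range, nsmul_eq_mul]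
  have hT : |ghat a (x r) (ξ (r + 1)) - ghat b (x r) (ξ (r + 1))| ≤ θ' * d :=
    hlip (x r) (ξ (r + 1)) a hxr1 b hxr
  -- express the difference
  have hkey : γ * d ^ 2 ≤ 2 * θ' / ((r : ℝ) + 1) * d := by
    have hgd : γ * d ^ 2 ≤ (F r a - F r b) + (F (r + 1) b - F (r + 1) a) := by linarith
    set Sa := ∑ i ∈ Finset.range r, ghat a (x i) (ξ (i + 1)) with hSa
    set Sb := ∑ i ∈ Finset.range r, ghat b (x i) (ξ (i + 1)) with hSb
    have hFa : F (r + 1) a = (1 / ((r : ℝ) + 1)) * (Sa + ghat a (x r) (ξ (r + 1))) := by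
      simp [hF, Finset.sum_range_succ, hSa]
    have hFb : F (r + 1) b = (1 / ((r : ℝ) + 1)) * (Sb + ghat b (x r) (ξ (r + 1))) := by
      simp [hF, Finset.sum_range_succ, hSb]
    have hFra : F r a = (1 / (r : ℝ)) * Sa := by simp [hF, hSa]
    have hFrb : F r b = (1 / (r : ℝ)) * Sb := by simp [hF, hSb]
    have hdiff : (F r a - F r b) + (F (r + 1) b - F (r + 1) a)
        = (1 / ((r : ℝ) * ((r : ℝ) + 1))) * (Sa - Sb)
          - (1 / ((r : ℝ) + 1)) * (ghat a (x r) (ξ (r + 1)) - ghat b (x r) (ξ (r + 1))) := by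
      rw [hFa, hFb, hFra, hFrb]
      field_simp
      ring
    have hSab : Sa - Sb = ∑ i ∈ Finset.range r,
        (ghat a (x i) (ξ (i + 1)) - ghat b (x i) (ξ (i + 1))) := by
      rw [Finset.sum_sub_distrib]
    rw [← hSab] at hS1
    have hb1 : (1 / ((r : ℝ) * ((r : ℝ) + 1))) * (Sa - Sb)
        ≤ (1 / ((r : ℝ) * ((r : ℝ) + 1))) * ((r : ℝ) * (θ' * d)) := by
      apply mul_le_mul_of_nonneg_left _ (by positivity)
      exact (le_abs_self _).trans hS1
    have hb2 : - ((1 / ((r : ℝ) + 1)) * (ghat a (x r) (ξ (r + 1)) - ghat b (x r) (ξ (r + 1))))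
        ≤ (1 / ((r : ℝ) + 1)) * (θ' * d) := by
      rw [← mul_neg]
      apply mul_le_mul_of_nonneg_left _ (by positivity)
      exact (neg_le_abs _).trans hT
    have heq : (1 / ((r : ℝ) * ((r : ℝ) + 1))) * ((r : ℝ) * (θ' * d))
        + (1 / ((r : ℝ) + 1)) * (θ' * d) = 2 * θ' / ((r : ℝ) + 1) * d := by
      field_simp
      ring
    calc γ * d ^ 2 ≤ (F r a - F r b) + (F (r + 1) b - F (r + 1) a) := hgd
      _ = (1 / ((r : ℝ) * ((r : ℝ) + 1))) * (Sa - Sb)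
          - (1 / ((r : ℝ) + 1)) * (ghat a (x r) (ξ (r + 1)) - ghat b (x r) (ξ (r + 1))) := hdiff
      _ ≤ (1 / ((r : ℝ) * ((r : ℝ) + 1))) * ((r : ℝ) * (θ' * d))
          + (1 / ((r : ℝ) + 1)) * (θ' * d) := by linarith
      _ = 2 * θ' / ((r : ℝ) + 1) * d := heq
  -- conclude
  show d ≤ 2 * θ' / γ * (1 / ((r : ℝ) + 1))
  rcases eq_or_lt_of_le hd0 with h | h
  · rw [← h]; positivity
  · have : γ * d ≤ 2 * θ' / ((r : ℝ) + 1) := by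
      have := (mul_le_mul_iff_of_pos_right h).mpr (le_refl d)
      nlinarith [hkey]
    have h3 : d ≤ (2 * θ' / ((r : ℝ) + 1)) / γ := (le_div_iff₀' hγ).mpr this
    calc d ≤ (2 * θ' / ((r : ℝ) + 1)) / γ := h3
      _ = 2 * θ' / γ * (1 / ((r : ℝ) + 1)) := by ring
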